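/- Let P be a register protocol with initial value d0 and target qf, and suppose Post*(↑{⟨q0, d0⟩}) = ↑{θ_1, …, θ_n} and Pre*([qf]) = ↑{η_1, …, η_m} for finite families of configurations (θ_i) and (η_j). Then Post*(↑{⟨q0, d0⟩}) is included in Pre*([qf]) modulo single-state incrementation if, and only if, for every i ∈ [1; n] and every q in the support of θ_i, there exists j ∈ [1; m] such that data(θ_i) = data(η_j), the supports of st(θ_i) and st(η_j) are equal, and st(η_j)(q') ≤ st(θ_i)(q') for every q' ∈ Q \ {q}. -/

import Mathlib

/-- Operation type of a register protocol: read or write. -/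
inductive Op : Type
  | R : Op
  | W : Op
deriving DecidableEq

instance instFintypeOp : Fintype Op :=
  ⟨{Op.R, Op.W}, fun x => by cases x <;> simp⟩

/-- A location has at least one outgoing transition. -/
def Nonblock {Q D : Type*} (T : Set (Q × Op × D × Q)) : Prop :=
  ∀ q : Q, ∃ op d q', (q, op, d, q') ∈ T

/-- Whenever a read transition exists from `q`, reads of every datum are enabled in `q`. -/
def ReadTotal {Q D : Type*} (T : Set (Q × Op × D × Q)) : Prop :=
  ∀ q d' q', (q, Op.R, d', q') ∈ T → ∀ d : D, ∃ qd, (q, Op.R, d, qd) ∈ T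

/-- One step of the distributed system associated with transition set `T`:
a configuration is a pair of a finite multiset of locations and a register datum. -/
def IsStep {Q D : Type*} [DecidableEq Q] (T : Set (Q × Op × D × Q)) :
    Multiset Q × D → Multiset Q × D → Prop := fun γ γ' =>
  ∃ q op d'' q', (q, op, d'', q') ∈ T ∧ q ∈ γ.1 ∧
    γ'.1 = γ.1 - {q} + {q'} ∧
    ((op = Op.R ∧ γ.2 = d'' ∧ γ'.2 = d'') ∨ (op = Op.W ∧ γ'.2 = d''))

/-- Reachability: reflexive-transitive closure of the step relation. -/
def Reach {Q D : Type*} [DecidableEq Q] (T : Set (Q × Op × D × Q)) :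
    Multiset Q × D → Multiset Q × D → Prop :=
  Relation.ReflTransGen (IsStep T)

/-- `PostStar T S` is the set of configurations reachable from some configuration of `S`. -/
def PostStar {Q D : Type*} [DecidableEq Q] (T : Set (Q × Op × D × Q))
    (S : Set (Multiset Q × D)) : Set (Multiset Q × D) :=
  {γ' | ∃ γ ∈ S, Reach T γ γ'}

/-- `PreStar T S` is the set of configurations from which some configuration of `S`
is reachable. -/
def PreStar {Q D : Type*} [DecidableEq Q] (T : Set (Q × Op × D × Q))
    (S : Set (Multiset Q × D)) : Set (Multiset Q × D) :=
  {γ | ∃ γ' ∈ S, Reach T γ γ'}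

/-- `[qf]`: configurations containing at least one process in location `qf`. -/
def TargetSet {Q D : Type*} [DecidableEq Q] (qf : Q) : Set (Multiset Q × D) :=
  {γ | 0 < γ.1.count qf}

/-- The order `⪯` on configurations: same register content, same support,
and componentwise smaller multiset. -/
def ConfLE {Q D : Type*} [DecidableEq Q] (γ γ' : Multiset Q × D) : Prop :=
  γ.2 = γ'.2 ∧ γ.1.toFinset = γ'.1.toFinset ∧ γ.1 ≤ γ'.1

/-- Upward closure of a set of configurations with respect to `⪯`. -/
def UpSet {Q D : Type*} [DecidableEq Q] (B : Set (Multiset Q × D)) :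
    Set (Multiset Q × D) :=
  {γ' | ∃ γ ∈ B, ConfLE γ γ'}

/-- `Δ` is included in `Δ'` modulo single-state incrementation. -/
def IncModSSI {Q D : Type*} [DecidableEq Q] (Δ Δ' : Set (Multiset Q × D)) : Prop :=
  ∀ γ ∈ Δ, ∀ q ∈ γ.1.toFinset, ∃ k : ℕ, (γ.1 + Multiset.replicate k q, γ.2) ∈ Δ'

lemma toFinset_add_replicate {Q : Type*} [DecidableEq Q] (s : Multiset Q) (q : Q)
    (hq : q ∈ s) (k : ℕ) : (s + Multiset.replicate k q).toFinset = s.toFinset := by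
  ext x
  simp only [Multiset.mem_toFinset, Multiset.mem_add, Multiset.mem_replicate]
  constructor
  · rintro (h | ⟨-, rfl⟩)
    · exact h
    · exact hq
  · exact Or.inl

/-- characterization of inclusion modulo single-state incrementation
of `Post*(↑{⟨q0,d0⟩}) = ↑{θ_1,…,θ_n}` in `Pre*([qf]) = ↑{η_1,…,η_m}` via the
minimal elements. -/
theorem stmt_6 {Q D : Type*} [DecidableEq Q]
    (T : Set (Q × Op × D × Q)) (hnb : Nonblock T) (hrt : ReadTotal T)
    (q0 qf : Q) (d0 : D) (n m : ℕ)
    (θ : Fin n → Multiset Q × D) (η : Fin m → Multiset Q × D)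
    (hpost : PostStar T (UpSet {(({q0} : Multiset Q), d0)}) = UpSet (Set.range θ))
    (hpre : PreStar T (TargetSet qf) = UpSet (Set.range η)) :
    IncModSSI (PostStar T (UpSet {(({q0} : Multiset Q), d0)}))
        (PreStar T (TargetSet qf)) ↔
      ∀ i : Fin n, ∀ q ∈ (θ i).1.toFinset, ∃ j : Fin m,
        (θ i).2 = (η j).2 ∧ (θ i).1.toFinset = (η j).1.toFinset ∧
        ∀ q' : Q, q' ≠ q → (η j).1.count q' ≤ (θ i).1.count q' := by
  constructor
  · intro h i q hq
    have hθ : θ i ∈ PostStar T (UpSet {(({q0} : Multiset Q), d0)}) := by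
      rw [hpost]
      exact ⟨θ i, ⟨i, rfl⟩, rfl, rfl, le_refl _⟩
    obtain ⟨k, hk⟩ := h (θ i) hθ q hq
    rw [hpre] at hk
    obtain ⟨γ, ⟨j, rfl⟩, hd, hs, hle⟩ := hk
    refine ⟨j, hd.symm, ?_, ?_⟩
    · rw [hs, toFinset_add_replicate _ _ (Multiset.mem_toFinset.mp hq)]
    · intro q' hq'
      have := Multiset.le_iff_count.mp hle q'
      rwa [Multiset.count_add, Multiset.count_replicate, if_neg (Ne.symm hq'), add_zero] at this
  · intro h γ hγ q hq
    rw [hpost] at hγ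
    obtain ⟨γ0, ⟨i, rfl⟩, hd, hs, hle⟩ := hγ
    have hq' : q ∈ (θ i).1.toFinset := by rw [hs]; exact hq
    obtain ⟨j, hjd, hjs, hjc⟩ := h i q hq'
    refine ⟨(η j).1.count q, ?_⟩
    rw [hpre]
    refine ⟨η j, ⟨j, rfl⟩, hjd.symm.trans hd, ?_, ?_⟩
    · rw [toFinset_add_replicate _ _ (Multiset.mem_toFinset.mp hq), ← hjs, hs]
    · rw [Multiset.le_iff_count]
      intro a
      rw [Multiset.count_add, Multiset.count_replicate]
      by_cases ha : a = q
      · subst ha; rw [if_pos rfl]; exact Nat.le_add_left _ _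
      · rw [if_neg (fun h => ha h.symm), add_zero]
        exact (hjc a ha).trans (Multiset.le_iff_count.mp hle a)
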